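/- Let k ≥ 1, a ≥ 1, b ≥ 0 and c ≥ 1 be integers, d := gcd(a, b), a' := a/d, b' := b/d, and let p be a prime with p | d. Then for every positive integer n, v_p(g_{k,φ}(n)) = k·v_p(φ(d)) + Σ_{e≥1} max(0, #{m ∈ S_{k,a',b',c}(n) : p^e | m} − 1) + Σ_q max(0, #{m ∈ S_{k,a',b',c}(n) : q | m} − 1) · v_p(q − 1), where the last sum ranges over all primes q with q ∤ d and p | (q − 1). -/

import Mathlib

open Finset

section
variable {α : Type*}

lemma padicValNat_finset_prod {p : ℕ} (hp : p.Prime) (s : Finset α) (f : α → ℕ)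
    (hf : ∀ x ∈ s, f x ≠ 0) :
    padicValNat p (∏ x ∈ s, f x) = ∑ x ∈ s, padicValNat p (f x) := by
  rw [← Nat.factorization_def _ hp, Nat.factorization_prod hf]
  rw [Finsupp.finset_sum_apply]
  exact Finset.sum_congr rfl fun x hx => Nat.factorization_def _ hp

lemma finset_lcm_ne_zero {s : Finset α} (hs : s.Nonempty) {f : α → ℕ}
    (hf : ∀ x ∈ s, f x ≠ 0) : s.lcm f ≠ 0 := by
  intro h
  rcases (Finset.lcm_eq_zero_iff).mp h with ⟨x, hx, hx0⟩
  exact hf x hx hx0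

lemma padicValNat_finset_lcm {p : ℕ} (hp : p.Prime) (s : Finset α) (hs : s.Nonempty)
    (f : α → ℕ) (hf : ∀ x ∈ s, f x ≠ 0) :
    padicValNat p (s.lcm f) = s.sup fun x => padicValNat p (f x) := by
  induction hs using Finset.Nonempty.cons_induction with
  | singleton a => simp [hf]
  | cons a s ha hs ih =>
    have hf' : ∀ x ∈ s, f x ≠ 0 := fun x hx => hf x (Finset.mem_cons_of_mem hx)
    have hfa : f a ≠ 0 := hf a (Finset.mem_cons_self a s)
    have hlcm : s.lcm f ≠ 0 := finset_lcm_ne_zero hs hf'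
    classical
    rw [Finset.cons_eq_insert, Finset.lcm_insert, Finset.sup_insert, ← ih hf']
    rw [← Nat.factorization_def _ hp, ← Nat.factorization_def _ hp,
      ← Nat.factorization_def _ hp, lcm_eq_nat_lcm, Nat.factorization_lcm hfa hlcm,
      Finsupp.sup_apply]

lemma vp_totient {p : ℕ} (hp : p.Prime) {m : ℕ} (hm : m ≠ 0) :
    padicValNat p m.totient =
      (m.factorization p - 1) + ∑ q ∈ m.primeFactors, padicValNat p (q - 1) := by
  haveI : Fact p.Prime := ⟨hp⟩
  rw [Nat.totient_eq_prod_factorization hm, Finsupp.prod]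
  rw [padicValNat_finset_prod hp _ _ (fun q hq => by
    have hq' : q.Prime := Nat.prime_of_mem_primeFactors hq
    have h2 : 2 ≤ q := hq'.two_le
    exact Nat.mul_ne_zero (pow_ne_zero _ (by omega)) (by omega))]
  have key : ∀ q ∈ m.factorization.support,
      padicValNat p (q ^ (m.factorization q - 1) * (q - 1))
        = (if q = p then m.factorization q - 1 else 0) + padicValNat p (q - 1) := by
    intro q hq
    have hq' : q.Prime := Nat.prime_of_mem_primeFactors hq
    have h2 : 2 ≤ q := hq'.two_le
    rw [padicValNat.mul (pow_ne_zero _ hq'.ne_zero) (by omega : q - 1 ≠ 0)]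
    congr 1
    by_cases hqp : q = p
    · subst hqp; rw [if_pos rfl, padicValNat.prime_pow]
    · rw [if_neg hqp, padicValNat.pow _ _,
        padicValNat.eq_zero_of_not_dvd, mul_zero]
      intro hdvd
      exact hqp ((Nat.prime_dvd_prime_iff_eq hp hq').mp hdvd).symm
  rw [Finset.sum_congr rfl key, Finset.sum_add_distrib]
  congr 1
  rw [Finset.sum_ite_eq' _ p (fun q => m.factorization q - 1)]
  by_cases hpm : p ∈ m.factorization.support
  · rw [if_pos hpm]
  · rw [if_neg hpm]
    have : m.factorization p = 0 := Finsupp.notMem_support_iff.mp hpm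
    omega

lemma sum_vp_eq_sup_add_finsum {p : ℕ} (hp : p.Prime) {ι : Type*}
    (s : Finset ι) (g : ι → ℕ) [∀ e i, Decidable (p ^ e ∣ g i)]
    (hg : ∀ i ∈ s, g i ≠ 0) :
    ∑ i ∈ s, padicValNat p (g i) =
      (s.sup fun i => padicValNat p (g i)) +
      ∑ᶠ (e : ℕ) (_ : 1 ≤ e), ((s.filter fun i => p ^ e ∣ g i).card - 1) := by
  classical
  set N := s.sup g with hN
  have hdvd : ∀ (e : ℕ), ∀ i ∈ s, (p ^ e ∣ g i ↔ e ≤ padicValNat p (g i)) := by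
    intro e i hi
    rw [← Nat.factorization_def _ hp]
    exact hp.pow_dvd_iff_le_factorization (hg i hi)
  have hvN : ∀ i ∈ s, padicValNat p (g i) ≤ N := by
    intro i hi
    have h1 : (g i).factorization p < g i := Nat.factorization_lt p (hg i hi)
    have h2 : g i ≤ N := Finset.le_sup hi
    rw [← Nat.factorization_def _ hp]
    omega
  have hMN : (s.sup fun i => padicValNat p (g i)) ≤ N :=
    Finset.sup_le fun i hi => hvN i hi
  have hfin : (∑ᶠ (e : ℕ) (_ : 1 ≤ e), ((s.filter fun i => p ^ e ∣ g i).card - 1)) =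
      ∑ e ∈ Finset.Icc 1 N, ((s.filter fun i => p ^ e ∣ g i).card - 1) := by
    apply finsum_mem_eq_sum_of_inter_support_eq
      (fun e => ((s.filter fun i => p ^ e ∣ g i).card - 1))
    ext e
    simp only [Set.mem_inter_iff, Set.mem_setOf_eq, Function.mem_support, Finset.coe_Icc,
      Set.mem_Icc, ne_eq]
    constructor
    · rintro ⟨he, hne⟩
      have hnonempty : (s.filter fun i => p ^ e ∣ g i).Nonempty := by
        rw [← Finset.card_pos]; have := Function.mem_support.mp hne; beta_reduce at this; omega
      obtain ⟨i, hi⟩ := hnonempty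
      rw [Finset.mem_filter] at hi
      have := (hdvd e i hi.1).mp hi.2
      exact ⟨⟨he, le_trans this (hvN i hi.1)⟩, hne⟩
    · rintro ⟨⟨h1, _⟩, hne⟩
      exact ⟨h1, hne⟩
  rw [hfin]
  have key1 : ∀ i ∈ s, (Finset.Icc 1 N).filter (fun e => p ^ e ∣ g i)
      = Finset.Icc 1 (padicValNat p (g i)) := by
    intro i hi
    ext e
    simp only [Finset.mem_filter, Finset.mem_Icc]
    constructor
    · rintro ⟨⟨h1, _⟩, h3⟩
      exact ⟨h1, (hdvd e i hi).mp h3⟩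
    · rintro ⟨h1, h2⟩
      exact ⟨⟨h1, h2.trans (hvN i hi)⟩, (hdvd e i hi).mpr h2⟩
  have sum_swap : ∑ e ∈ Finset.Icc 1 N, (s.filter fun i => p ^ e ∣ g i).card
      = ∑ i ∈ s, padicValNat p (g i) := by
    simp_rw [Finset.card_filter]
    rw [Finset.sum_comm]
    apply Finset.sum_congr rfl
    intro i hi
    rw [← Finset.card_filter, key1 i hi, Nat.card_Icc]
    omega
  have sup_card : (Finset.Icc 1 N).filter
        (fun e => 1 ≤ (s.filter fun i => p ^ e ∣ g i).card)
      = Finset.Icc 1 (s.sup fun i => padicValNat p (g i)) := by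
    ext e
    simp only [Finset.mem_filter, Finset.mem_Icc]
    constructor
    · rintro ⟨⟨h1, _⟩, hcard⟩
      have hbot : (⊥ : ℕ) < e := by
        rw [Nat.bot_eq_zero]; omega
      obtain ⟨i, hi⟩ := Finset.card_pos.mp (by omega : 0 < (s.filter fun i => p ^ e ∣ g i).card)
      rw [Finset.mem_filter] at hi
      exact ⟨h1, (Finset.le_sup_iff hbot).mpr ⟨i, hi.1, (hdvd e i hi.1).mp hi.2⟩⟩
    · rintro ⟨h1, h2⟩
      have hbot : (⊥ : ℕ) < e := by
        rw [Nat.bot_eq_zero]; omega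
      obtain ⟨i, hi, hie⟩ := (Finset.le_sup_iff hbot).mp h2
      refine ⟨⟨h1, hie.trans (hvN i hi)⟩, ?_⟩
      have hmem : i ∈ s.filter fun i => p ^ e ∣ g i :=
        Finset.mem_filter.mpr ⟨hi, (hdvd e i hi).mpr hie⟩
      have := Finset.card_pos.mpr ⟨i, hmem⟩
      omega
  have final : ∑ e ∈ Finset.Icc 1 N, (s.filter fun i => p ^ e ∣ g i).card
      = (s.sup fun i => padicValNat p (g i))
        + ∑ e ∈ Finset.Icc 1 N, ((s.filter fun i => p ^ e ∣ g i).card - 1) := by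
    have hsplit : ∀ e ∈ Finset.Icc 1 N, (s.filter fun i => p ^ e ∣ g i).card
        = (if 1 ≤ (s.filter fun i => p ^ e ∣ g i).card then 1 else 0)
          + ((s.filter fun i => p ^ e ∣ g i).card - 1) := by
      intro e _
      split <;> omega
    rw [Finset.sum_congr rfl hsplit, Finset.sum_add_distrib, ← Finset.card_filter,
      sup_card, Nat.card_Icc]
    omega
  omega

end

lemma key_nat (p : ℕ) (hp : p.Prime) (d : ℕ) (hd0 : d ≠ 0) (hpd : p ∣ d)
    (k : ℕ) (S : ℕ → ℕ) (hS0 : ∀ i, S i ≠ 0) :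
    ∑ i ∈ Finset.range (k+1), padicValNat p (d * S i).totient
      = padicValNat p ((Finset.range (k+1)).lcm fun i => d * S i).totient
        + (k * padicValNat p d.totient
        + (∑ᶠ (e : ℕ) (_ : 1 ≤ e),
            (((Finset.range (k+1)).filter fun i => p ^ e ∣ S i).card - 1))
        + (∑ᶠ (q : ℕ) (_ : q.Prime ∧ ¬ q ∣ d ∧ p ∣ (q - 1)),
            ((((Finset.range (k+1)).filter fun i => q ∣ S i).card - 1)
              * padicValNat p (q - 1)))) := by
  classical
  haveI : Fact p.Prime := ⟨hp⟩
  have hsne : (Finset.range (k+1)).Nonempty := ⟨0, by simp⟩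
  have hm0 : ∀ i, d * S i ≠ 0 := fun i => Nat.mul_ne_zero hd0 (hS0 i)
  set L := (Finset.range (k+1)).lcm fun i => d * S i with hL
  have hL0 : L ≠ 0 := finset_lcm_ne_zero hsne (fun i _ => hm0 i)
  have hdm : ∀ i, d ∣ d * S i := fun i => ⟨S i, rfl⟩
  have hmL : ∀ i ∈ Finset.range (k+1), d * S i ∣ L := fun i hi => Finset.dvd_lcm hi
  have hdL : d ∣ L := (hdm 0).trans (hmL 0 (by simp))
  have hvm : ∀ i, (d * S i).factorization p
      = d.factorization p + (S i).factorization p := by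
    intro i
    rw [Nat.factorization_mul hd0 (hS0 i)]
    simp
  have hvd1 : 1 ≤ d.factorization p := by
    have := Nat.Prime.factorization_pos_of_dvd hp hd0 hpd
    omega
  -- valuation of the lcm
  have hvL : L.factorization p
      = d.factorization p + ((Finset.range (k+1)).sup fun i => padicValNat p (S i)) := by
    rw [Nat.factorization_def _ hp, hL,
      padicValNat_finset_lcm hp _ hsne _ (fun i _ => hm0 i)]
    have hval : ∀ i, padicValNat p (d * S i)
        = d.factorization p + padicValNat p (S i) := by
      intro i
      rw [← Nat.factorization_def (S i) hp, ← hvm i, Nat.factorization_def _ hp]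
    apply le_antisymm
    · exact Finset.sup_le fun i hi => by
        rw [hval i]
        exact Nat.add_le_add_left
          (Finset.le_sup (f := fun i => padicValNat p (S i)) hi) _
    · obtain ⟨i0, hi0, hsup⟩ := Finset.exists_mem_eq_sup _ hsne
        (fun i => padicValNat p (S i))
      rw [hsup, ← hval i0]
      exact Finset.le_sup (f := fun x => padicValNat p (d * S x)) hi0
  set T := L.primeFactors with hT
  -- prime factors of each term
  have hPF : ∀ i ∈ Finset.range (k+1), (d * S i).primeFactors
      = T.filter (fun q => q ∣ d * S i) := by
    intro i hi
    ext q
    simp only [Nat.mem_primeFactors, Finset.mem_filter, hT]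
    constructor
    · rintro ⟨hq, hdvd, -⟩
      exact ⟨⟨hq, hdvd.trans (hmL i hi), hL0⟩, hdvd⟩
    · rintro ⟨⟨hq, -, -⟩, hdvd⟩
      exact ⟨hq, hdvd, hm0 i⟩
  have hpfd : T.filter (fun q => q ∣ d) = d.primeFactors := by
    ext q
    simp only [Nat.mem_primeFactors, Finset.mem_filter, hT]
    constructor
    · rintro ⟨⟨hq, -, -⟩, hdvd⟩
      exact ⟨hq, hdvd, hd0⟩
    · rintro ⟨hq, hdvd, -⟩
      exact ⟨⟨hq, hdvd.trans hdL, hL0⟩, hdvd⟩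
  -- every prime of T divides some term
  have hqdvdL : ∀ q ∈ T, ∃ i ∈ Finset.range (k+1), q ∣ d * S i := by
    intro q hq
    rw [hT, Nat.mem_primeFactors] at hq
    obtain ⟨hqp, hqL, -⟩ := hq
    have h1 : 1 ≤ padicValNat q L := by
      have := Nat.Prime.factorization_pos_of_dvd hqp hL0 hqL
      rw [Nat.factorization_def _ hqp] at this
      omega
    rw [hL, padicValNat_finset_lcm hqp _ hsne _ (fun i _ => hm0 i)] at h1
    have hbot : (⊥ : ℕ) < 1 := by rw [Nat.bot_eq_zero]; omega
    obtain ⟨i, hi, hge⟩ := (Finset.le_sup_iff hbot).mp h1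
    refine ⟨i, hi, ?_⟩
    rw [← Nat.factorization_def _ hqp] at hge
    exact (Nat.Prime.dvd_iff_one_le_factorization hqp (hm0 i)).mpr hge
  -- rewrite all totient valuations
  have hstep : ∀ i ∈ Finset.range (k+1), padicValNat p (d * S i).totient
      = ((d.factorization p - 1) + padicValNat p (S i))
        + ∑ q ∈ T.filter (fun q => q ∣ d * S i), padicValNat p (q - 1) := by
    intro i hi
    rw [vp_totient hp (hm0 i), hPF i hi, hvm i, Nat.factorization_def (S i) hp]
    congr 1
    omega
  rw [Finset.sum_congr rfl hstep, vp_totient hp hL0, vp_totient hp hd0, ← hT, hvL]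
  -- abbreviations
  rw [Finset.sum_add_distrib, Finset.sum_add_distrib, Finset.sum_const,
    Finset.card_range, smul_eq_mul]
  -- the double prime sum
  have sumP : ∑ i ∈ Finset.range (k+1),
        ∑ q ∈ T.filter (fun q => q ∣ d * S i), padicValNat p (q - 1)
      = ∑ q ∈ T, ((Finset.range (k+1)).filter fun i => q ∣ d * S i).card
          * padicValNat p (q - 1) := by
    simp_rw [Finset.sum_filter]
    rw [Finset.sum_comm]
    apply Finset.sum_congr rfl
    intro q hq
    rw [← Finset.sum_filter, Finset.sum_const, smul_eq_mul]
  rw [sumP]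
  -- split T according to divisibility by d
  rw [← Finset.sum_filter_add_sum_filter_not T (fun q => q ∣ d)
    (fun q => ((Finset.range (k+1)).filter fun i => q ∣ d * S i).card
      * padicValNat p (q - 1))]
  rw [← Finset.sum_filter_add_sum_filter_not T (fun q => q ∣ d)
    (fun q => padicValNat p (q - 1))]
  -- d-part
  have hTd : ∑ q ∈ T.filter (fun q => q ∣ d),
        ((Finset.range (k+1)).filter fun i => q ∣ d * S i).card * padicValNat p (q - 1)
      = (k+1) * ∑ q ∈ d.primeFactors, padicValNat p (q - 1) := by
    rw [hpfd, Finset.mul_sum]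
    apply Finset.sum_congr rfl
    intro q hq
    have hqd : q ∣ d := Nat.dvd_of_mem_primeFactors hq
    have : (Finset.range (k+1)).filter (fun i => q ∣ d * S i) = Finset.range (k+1) :=
      Finset.filter_true_of_mem fun i _ => hqd.trans (hdm i)
    rw [this, Finset.card_range]
  rw [hTd, hpfd]
  -- non-d part : switch from d * S i to S i
  have hTnd1 : ∀ q ∈ T.filter (fun q => ¬ q ∣ d),
      ((Finset.range (k+1)).filter fun i => q ∣ d * S i)
        = ((Finset.range (k+1)).filter fun i => q ∣ S i) := by
    intro q hq
    rw [Finset.mem_filter, hT, Nat.mem_primeFactors] at hq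
    obtain ⟨⟨hqp, -, -⟩, hqd⟩ := hq
    have hcop : Nat.Coprime q d := (Nat.Prime.coprime_iff_not_dvd hqp).mpr hqd
    apply Finset.filter_congr
    intro i _
    constructor
    · intro h
      exact hcop.dvd_of_dvd_mul_left h
    · intro h
      exact h.mul_left d
  have hTnd2 : ∀ q ∈ T.filter (fun q => ¬ q ∣ d),
      1 ≤ ((Finset.range (k+1)).filter fun i => q ∣ S i).card := by
    intro q hq
    have hq' := hq
    rw [Finset.mem_filter] at hq'
    obtain ⟨i, hi, hdv⟩ := hqdvdL q hq'.1
    rw [← hTnd1 q hq]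
    have : i ∈ (Finset.range (k+1)).filter fun i => q ∣ d * S i :=
      Finset.mem_filter.mpr ⟨hi, hdv⟩
    have := Finset.card_pos.mpr ⟨i, this⟩
    omega
  have hTnd : ∑ q ∈ T.filter (fun q => ¬ q ∣ d),
        ((Finset.range (k+1)).filter fun i => q ∣ d * S i).card * padicValNat p (q - 1)
      = ∑ q ∈ T.filter (fun q => ¬ q ∣ d), padicValNat p (q - 1)
        + ∑ q ∈ T.filter (fun q => ¬ q ∣ d),
            (((Finset.range (k+1)).filter fun i => q ∣ S i).card - 1)
              * padicValNat p (q - 1) := by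
    rw [← Finset.sum_add_distrib]
    apply Finset.sum_congr rfl
    intro q hq
    rw [hTnd1 q hq]
    have h1 := hTnd2 q hq
    obtain ⟨c', hc'⟩ : ∃ c', ((Finset.range (k+1)).filter fun i => q ∣ S i).card = c' + 1 :=
      ⟨((Finset.range (k+1)).filter fun i => q ∣ S i).card - 1, by omega⟩
    rw [hc', Nat.add_sub_cancel]
    ring
  rw [hTnd]
  -- the second finsum equals the finite sum over T.filter (¬ ∣ d)
  have hB : (∑ᶠ (q : ℕ) (_ : q.Prime ∧ ¬ q ∣ d ∧ p ∣ (q - 1)),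
        ((((Finset.range (k+1)).filter fun i => q ∣ S i).card - 1)
          * padicValNat p (q - 1)))
      = ∑ q ∈ T.filter (fun q => ¬ q ∣ d),
          (((Finset.range (k+1)).filter fun i => q ∣ S i).card - 1)
            * padicValNat p (q - 1) := by
    have hstep1 : (∑ᶠ (q : ℕ) (_ : q.Prime ∧ ¬ q ∣ d ∧ p ∣ (q - 1)),
          ((((Finset.range (k+1)).filter fun i => q ∣ S i).card - 1)
            * padicValNat p (q - 1)))
        = ∑ q ∈ T.filter (fun q => ¬ q ∣ d ∧ p ∣ (q - 1)),
            (((Finset.range (k+1)).filter fun i => q ∣ S i).card - 1)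
              * padicValNat p (q - 1) := by
      apply finsum_mem_eq_sum_of_inter_support_eq
      ext q
      simp only [Set.mem_inter_iff, Set.mem_setOf_eq, Function.mem_support, Finset.mem_coe,
        Finset.mem_filter, ne_eq]
      constructor
      · rintro ⟨⟨hqp, hqd, hpq⟩, hne⟩
        have hcard : 2 ≤ ((Finset.range (k+1)).filter fun i => q ∣ S i).card := by
          by_contra hc
          have : (((Finset.range (k+1)).filter fun i => q ∣ S i).card - 1) = 0 := by omega
          have hne' := Function.mem_support.mp hne; beta_reduce at hne'
          rw [this, zero_mul] at hne'
          exact hne' rfl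
        obtain ⟨i, hi⟩ := Finset.card_pos.mp
          (by omega : 0 < ((Finset.range (k+1)).filter fun i => q ∣ S i).card)
        rw [Finset.mem_filter] at hi
        have hqm : q ∣ d * S i := hi.2.mul_left d
        have hqT : q ∈ T := by
          rw [hT, Nat.mem_primeFactors]
          exact ⟨hqp, hqm.trans (hmL i hi.1), hL0⟩
        exact ⟨⟨hqT, hqd, hpq⟩, hne⟩
      · rintro ⟨⟨hqT, hqd, hpq⟩, hne⟩
        rw [hT, Nat.mem_primeFactors] at hqT
        exact ⟨⟨hqT.1, hqd, hpq⟩, hne⟩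
    rw [hstep1]
    have hsplit : T.filter (fun q => ¬ q ∣ d ∧ p ∣ (q - 1))
        = (T.filter (fun q => ¬ q ∣ d)).filter (fun q => p ∣ (q - 1)) := by
      rw [Finset.filter_filter]
    rw [hsplit]
    rw [← Finset.sum_filter_add_sum_filter_not (T.filter (fun q => ¬ q ∣ d))
      (fun q => p ∣ (q - 1))]
    have hzero : ∑ q ∈ (T.filter (fun q => ¬ q ∣ d)).filter (fun q => ¬ p ∣ (q - 1)),
        (((Finset.range (k+1)).filter fun i => q ∣ S i).card - 1)
          * padicValNat p (q - 1) = 0 := by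
      apply Finset.sum_eq_zero
      intro q hq
      rw [Finset.mem_filter] at hq
      rw [padicValNat.eq_zero_of_not_dvd hq.2, mul_zero]
    rw [hzero, add_zero]
  rw [hB]
  -- the first finsum
  have hA : ∑ i ∈ Finset.range (k+1), padicValNat p (S i)
      = ((Finset.range (k+1)).sup fun i => padicValNat p (S i))
        + ∑ᶠ (e : ℕ) (_ : 1 ≤ e),
            (((Finset.range (k+1)).filter fun i => p ^ e ∣ S i).card - 1) :=
    sum_vp_eq_sup_add_finsum hp _ S (fun i _ => hS0 i)
  rw [hA]
  -- now pure arithmetic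
  have hLd1 : d.factorization p
        + ((Finset.range (k+1)).sup fun i => padicValNat p (S i)) - 1
      = (d.factorization p - 1)
        + ((Finset.range (k+1)).sup fun i => padicValNat p (S i)) := by omega
  rw [hLd1]
  generalize (d.factorization p - 1) = X
  generalize ((Finset.range (k+1)).sup fun i => padicValNat p (S i)) = M
  generalize (∑ᶠ (e : ℕ) (_ : 1 ≤ e),
      (((Finset.range (k+1)).filter fun i => p ^ e ∣ S i).card - 1)) = A
  generalize (∑ q ∈ d.primeFactors, padicValNat p (q - 1)) = W1
  generalize (∑ q ∈ T.filter (fun q => ¬ q ∣ d), padicValNat p (q - 1)) = W2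
  generalize (∑ q ∈ T.filter (fun q => ¬ q ∣ d),
      (((Finset.range (k+1)).filter fun i => q ∣ S i).card - 1)
        * padicValNat p (q - 1)) = B
  ring



/-- `g_{k,φ} (n) = (∏_{i=0}^{k} φ (b + a (n + i c))) / φ (lcm_{0 ≤ i ≤ k} (b + a (n + i c)))`. -/
def gkphi (k a b c n : ℕ) : ℚ :=
  (∏ i ∈ Finset.range (k + 1), ((b + a * (n + i * c)).totient : ℚ)) /
    (((Finset.range (k + 1)).lcm fun i => b + a * (n + i * c)).totient : ℚ)

/-- Formula (3.2): for a prime `p ∣ d`, where `d = gcd (a, b)`, `a' = a / d`,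
`b' = b / d`, for all positive `n`:
`v_p (g_{k,φ} (n)) = k v_p (φ (d)) + Σ_{e ≥ 1} max (0, #{m ∈ S (n) : p^e ∣ m} − 1)
 + Σ_{q prime, q ∤ d, p ∣ q − 1} max (0, #{m ∈ S (n) : q ∣ m} − 1) ⬝ v_p (q − 1)`,
where `S (n) = {b' + a' (n + i c) : 0 ≤ i ≤ k}`. -/
theorem vp_gkphi_formula_dvd_d (k a b c : ℕ)
    (hk : 1 ≤ k) (ha : 1 ≤ a) (hc : 1 ≤ c)
    (d a' b' : ℕ) (hd : d = Nat.gcd a b) (ha' : a' = a / d) (hb' : b' = b / d)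
    (p : ℕ) (hp : p.Prime) (hpd : p ∣ d) :
    ∀ n : ℕ, 0 < n →
      padicValRat p (gkphi k a b c n) =
        (k : ℤ) * padicValNat p d.totient
        + ((∑ᶠ (e : ℕ) (_ : 1 ≤ e),
            (((Finset.range (k + 1)).filter
                fun i => p ^ e ∣ b' + a' * (n + i * c)).card - 1) : ℕ) : ℤ)
        + ((∑ᶠ (q : ℕ) (_ : q.Prime ∧ ¬ q ∣ d ∧ p ∣ (q - 1)),
            ((((Finset.range (k + 1)).filter
                fun i => q ∣ b' + a' * (n + i * c)).card - 1)
              * padicValNat p (q - 1)) : ℕ) : ℤ) := by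
  intro n hn
  haveI : Fact p.Prime := ⟨hp⟩
  have hdpos : 0 < d := hd ▸ Nat.gcd_pos_of_pos_left b (by omega)
  have hd0 : d ≠ 0 := by omega
  have hda : d ∣ a := hd ▸ Nat.gcd_dvd_left a b
  have hdb : d ∣ b := hd ▸ Nat.gcd_dvd_right a b
  have hmS : ∀ i : ℕ, b + a * (n + i * c) = d * (b' + a' * (n + i * c)) := by
    intro i
    obtain ⟨a1, ha1⟩ := hda
    obtain ⟨b1, hb1⟩ := hdb
    subst ha1 hb1
    rw [ha', hb', Nat.mul_div_cancel_left _ hdpos, Nat.mul_div_cancel_left _ hdpos]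
    ring
  have hS0 : ∀ i : ℕ, b' + a' * (n + i * c) ≠ 0 := by
    intro i h
    have h2 := hmS i
    rw [h, mul_zero] at h2
    have : 0 < a * (n + i * c) := Nat.mul_pos (by omega) (by omega)
    omega
  have hm0 : ∀ i : ℕ, b + a * (n + i * c) ≠ 0 := by
    intro i
    rw [hmS i]
    exact Nat.mul_ne_zero hd0 (hS0 i)
  have hnum : (∏ i ∈ Finset.range (k+1), (b + a * (n + i * c)).totient) ≠ 0 := by
    apply Finset.prod_ne_zero_iff.mpr
    intro i _
    have : 0 < (b + a * (n + i * c)).totient := Nat.totient_pos.mpr (by have := hm0 i; omega)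
    omega
  have hL0 : ((Finset.range (k+1)).lcm fun i => b + a * (n + i * c)) ≠ 0 :=
    finset_lcm_ne_zero ⟨0, by simp⟩ (fun i _ => hm0 i)
  have hden : (((Finset.range (k+1)).lcm fun i => b + a * (n + i * c)).totient) ≠ 0 := by
    have : 0 < ((Finset.range (k+1)).lcm fun i => b + a * (n + i * c)).totient :=
      Nat.totient_pos.mpr (by have := hL0; omega)
    omega
  have hval : padicValRat p (gkphi k a b c n)
      = (padicValNat p (∏ i ∈ Finset.range (k+1), (b + a * (n + i * c)).totient) : ℤ)
        - padicValNat p (((Finset.range (k+1)).lcm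
            fun i => b + a * (n + i * c)).totient) := by
    rw [gkphi, ← Nat.cast_prod]
    rw [padicValRat.div (by exact_mod_cast hnum) (by exact_mod_cast hden)]
    rw [padicValRat.of_nat, padicValRat.of_nat]
  rw [hval]
  rw [padicValNat_finset_prod hp _ _ (fun i _ => by
    have : 0 < (b + a * (n + i * c)).totient := Nat.totient_pos.mpr (by have := hm0 i; omega)
    omega)]
  have hkey := key_nat p hp d hd0 hpd k (fun i => b' + a' * (n + i * c)) hS0
  beta_reduce at hkey
  have hsum : ∑ i ∈ Finset.range (k+1), padicValNat p (b + a * (n + i * c)).totient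
      = ∑ i ∈ Finset.range (k+1), padicValNat p (d * (b' + a' * (n + i * c))).totient :=
    Finset.sum_congr rfl fun i _ => by rw [hmS i]
  have hlcmeq : ((Finset.range (k+1)).lcm fun i => b + a * (n + i * c))
      = ((Finset.range (k+1)).lcm fun i => d * (b' + a' * (n + i * c))) := by
    congr 1
    exact funext hmS
  rw [hsum, hlcmeq, hkey]
  push_cast
  ring
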